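/- For every integer d ≥ 2, the function t ↦ f_d(t) is decreasing (antitone) on [0,∞): for all real numbers 0 ≤ s ≤ t, f_d(t) ≤ f_d(s). -/

import Mathlib

open Finset MeasureTheory

/-- `M d t = ∑_{k=0}^{d-1} C(d-1,k)² t^{2k}`. -/
noncomputable def M (d : ℕ) (t : ℝ) : ℝ :=
  ∑ k ∈ Finset.range d, ((d - 1).choose k : ℝ) ^ 2 * t ^ (2 * k)

/-- `A d t = ∑_{k=1}^{d-1} k² C(d-1,k)² t^{2(k-1)}`. -/
noncomputable def A (d : ℕ) (t : ℝ) : ℝ :=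
  ∑ k ∈ Finset.Icc 1 (d - 1), (k : ℝ) ^ 2 * ((d - 1).choose k : ℝ) ^ 2 * t ^ (2 * (k - 1))

/-- `B d t = ∑_{k=1}^{d-1} k C(d-1,k)² t^{2k-1}`. -/
noncomputable def B (d : ℕ) (t : ℝ) : ℝ :=
  ∑ k ∈ Finset.Icc 1 (d - 1), (k : ℝ) * ((d - 1).choose k : ℝ) ^ 2 * t ^ (2 * k - 1)

/-- The density `f d t = (1/π)·√(A_d(t)·M_d(t) − B_d(t)²) / M_d(t)`. -/
noncomputable def f (d : ℕ) (t : ℝ) : ℝ :=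
  (1 / Real.pi) * Real.sqrt (A d t * M d t - (B d t) ^ 2) / M d t

/-- The coefficients `a_k`. -/
noncomputable def a (d k : ℕ) : ℝ :=
  (∑ i ∈ Finset.range d, ∑ j ∈ Finset.range (d - 1),
      if i + j = k then ((d - 1).choose i : ℝ) ^ 2 * ((d - 2).choose j : ℝ) ^ 2 else 0)
  - (∑ i ∈ Finset.range (d - 1), ∑ j ∈ Finset.range (d - 1),
      if i + j + 1 = k then
        ((d - 2).choose i : ℝ) * ((d - 1).choose (i + 1) : ℝ) *
          ((d - 2).choose j : ℝ) * ((d - 1).choose (j + 1) : ℝ)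
      else 0)

namespace Stmt6Aux
open Polynomial

noncomputable def Pl : List ℝ → ℝ → ℝ
  | [], _ => 1
  | r :: l, t => (t ^ 2 + r) * Pl l t

noncomputable def Sl : List ℝ → ℝ → ℝ
  | [], _ => 0
  | r :: l, t => Pl l t + (t ^ 2 + r) * Sl l t

noncomputable def Tl : List ℝ → ℝ → ℝ
  | [], _ => 0
  | r :: l, t => 4 * t * Sl l t + (t ^ 2 + r) * Tl l t

noncomputable def Vl : List ℝ → ℝ → ℝ
  | [], _ => 0
  | r :: l, t => r * (Pl l t) ^ 2 + (t ^ 2 + r) ^ 2 * Vl l t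

lemma Pl_eq_prod (l : List ℝ) (t : ℝ) : Pl l t = (l.map (fun r => t ^ 2 + r)).prod := by
  induction l with
  | nil => simp [Pl]
  | cons r l ih => simp [Pl, ih]

lemma continuous_Pl (l : List ℝ) : Continuous (Pl l) := by
  induction l with
  | nil => simpa [Pl] using continuous_const
  | cons r l ih => exact ((continuous_pow 2).add continuous_const).mul ih

lemma continuous_Sl (l : List ℝ) : Continuous (Sl l) := by
  induction l with
  | nil => simpa [Sl] using continuous_const
  | cons r l ih =>
    exact (continuous_Pl l).add (((continuous_pow 2).add continuous_const).mul ih)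

lemma continuous_Vl (l : List ℝ) : Continuous (Vl l) := by
  induction l with
  | nil => simpa [Vl] using continuous_const
  | cons r l ih =>
    exact (continuous_const.mul ((continuous_Pl l).pow 2)).add
      ((((continuous_pow 2).add continuous_const).pow 2).mul ih)

lemma hasDerivAt_Pl (l : List ℝ) (t : ℝ) :
    HasDerivAt (Pl l) (2 * t * Sl l t) t := by
  induction l with
  | nil =>
    simp only [Pl, Sl, mul_zero]
    exact hasDerivAt_const t 1
  | cons r l ih =>
    have h1 : HasDerivAt (fun t : ℝ => t ^ 2 + r) (2 * t) t := by
      simpa using (hasDerivAt_pow 2 t).add_const r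
    have := h1.fun_mul ih
    refine this.congr_deriv ?_
    simp only [Sl]
    ring

lemma hasDerivAt_Sl (l : List ℝ) (t : ℝ) :
    HasDerivAt (Sl l) (Tl l t) t := by
  induction l with
  | nil =>
    simp only [Sl, Tl]
    exact hasDerivAt_const t 0
  | cons r l ih =>
    have h1 : HasDerivAt (fun t : ℝ => t ^ 2 + r) (2 * t) t := by
      simpa using (hasDerivAt_pow 2 t).add_const r
    have := (hasDerivAt_Pl l t).add (h1.fun_mul ih)
    refine this.congr_deriv ?_
    simp only [Tl]
    ring

lemma key_alg (l : List ℝ) (t : ℝ) :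
    (Sl l t + t * Tl l t / 2) * Pl l t - t ^ 2 * (Sl l t) ^ 2 = Vl l t := by
  induction l with
  | nil => simp [Pl, Sl, Tl, Vl]
  | cons r l ih =>
    simp only [Pl, Sl, Tl, Vl]
    linear_combination (t ^ 2 + r) ^ 2 * ih

lemma Pl_pos (l : List ℝ) (hl : ∀ r ∈ l, 0 < r) (t : ℝ) : 0 < Pl l t := by
  induction l with
  | nil => simp [Pl]
  | cons r l ih =>
    have hr : 0 < r := hl r List.mem_cons_self
    exact mul_pos (by positivity) (ih fun x hx => hl x (List.mem_cons_of_mem _ hx))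

lemma Vl_nonneg (l : List ℝ) (hl : ∀ r ∈ l, 0 < r) (t : ℝ) : 0 ≤ Vl l t := by
  induction l with
  | nil => simp [Vl]
  | cons r l ih =>
    have hr : 0 < r := hl r List.mem_cons_self
    have hV := ih fun x hx => hl x (List.mem_cons_of_mem _ hx)
    simp only [Vl]
    have := mul_nonneg hr.le (sq_nonneg (Pl l t))
    have := mul_nonneg (sq_nonneg (t ^ 2 + r)) hV
    linarith

lemma Vl_mono (l : List ℝ) (hl : ∀ r ∈ l, 0 < r) {s t : ℝ} (hs : 0 ≤ s) (hst : s ≤ t) :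
    Vl l t * (Pl l s) ^ 2 ≤ Vl l s * (Pl l t) ^ 2 := by
  induction l with
  | nil => simp [Vl]
  | cons r l ih =>
    have hr : 0 < r := hl r List.mem_cons_self
    have hl' : ∀ x ∈ l, 0 < x := fun x hx => hl x (List.mem_cons_of_mem _ hx)
    have ih' := ih hl'
    have hXs : 0 < s ^ 2 + r := by positivity
    have hXt : 0 < t ^ 2 + r := by positivity
    have hX : s ^ 2 + r ≤ t ^ 2 + r := by nlinarith
    have hPs := (Pl_pos l hl' s).le
    have hPt := (Pl_pos l hl' t).le
    have hVs := Vl_nonneg l hl' s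
    have hVt := Vl_nonneg l hl' t
    simp only [Pl, Vl]
    have h0 : (s ^ 2 + r) ^ 2 ≤ (t ^ 2 + r) ^ 2 := by nlinarith
    have h1 : r * (Pl l t) ^ 2 * ((s ^ 2 + r) * Pl l s) ^ 2 ≤
        r * (Pl l s) ^ 2 * ((t ^ 2 + r) * Pl l t) ^ 2 := by
      nlinarith [mul_le_mul_of_nonneg_left h0 (mul_nonneg hr.le (sq_nonneg (Pl l s * Pl l t)))]
    have h2 : (t ^ 2 + r) ^ 2 * Vl l t * ((s ^ 2 + r) * Pl l s) ^ 2 ≤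
        (s ^ 2 + r) ^ 2 * Vl l s * ((t ^ 2 + r) * Pl l t) ^ 2 := by
      nlinarith [mul_le_mul_of_nonneg_left ih' (sq_nonneg ((t ^ 2 + r) * (s ^ 2 + r)))]
    linarith [h1, h2]


noncomputable def qp (n : ℕ) : ℝ[X] :=
  ∑ k ∈ Finset.range (n + 1), (n.choose k ^ 2) • (X ^ k * (X + C 1) ^ (n - k))

lemma qd (n : ℕ) :
    derivative^[n] (X ^ n * (X + C 1) ^ n : ℝ[X]) = (Nat.factorial n) • qp n := by
  rw [Polynomial.iterate_derivative_mul, qp, smul_sum]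
  refine Finset.sum_congr rfl fun k hk => ?_
  have hk' : k ≤ n := by simp only [Finset.mem_range] at hk; omega
  rw [Polynomial.iterate_derivative_X_pow_eq_natCast_mul,
    Polynomial.iterate_derivative_X_add_pow]
  have h1 : n - (n - k) = k := by omega
  rw [h1]
  have h5 : n.choose k * n.descFactorial (n - k) * n.descFactorial k
      = Nat.factorial n * n.choose k ^ 2 := by
    have h2 : n.descFactorial (n - k) = Nat.factorial (n - k) * n.choose (n - k) :=
      Nat.descFactorial_eq_factorial_mul_choose n (n - k)
    have h3 : n.descFactorial k = Nat.factorial k * n.choose k :=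
      Nat.descFactorial_eq_factorial_mul_choose n k
    have h4 := Nat.choose_mul_factorial_mul_factorial hk'
    rw [h2, h3, Nat.choose_symm hk']
    calc n.choose k * (Nat.factorial (n - k) * n.choose k) * (Nat.factorial k * n.choose k)
        = (n.choose k * Nat.factorial k * Nat.factorial (n - k)) * n.choose k ^ 2 := by ring
      _ = Nat.factorial n * n.choose k ^ 2 := by rw [h4]
  rw [nsmul_eq_mul, nsmul_eq_mul, nsmul_eq_mul]
  trans (((n.choose k * n.descFactorial (n - k) * n.descFactorial k : ℕ) : ℝ[X]) *
    (X ^ k * (X + C 1) ^ (n - k)))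
  · push_cast
    ring
  · rw [h5]
    push_cast
    ring

lemma qp_natDegree_le (n : ℕ) : (qp n).natDegree ≤ n := by
  unfold qp
  refine Polynomial.natDegree_sum_le_of_forall_le _ _ fun k hk => ?_
  have hk' : k ≤ n := by simp only [Finset.mem_range] at hk; omega
  rw [nsmul_eq_mul]
  refine (Polynomial.natDegree_mul_le).trans ?_
  rw [Polynomial.natDegree_natCast]
  refine le_trans (by simpa only [zero_add] using (Polynomial.natDegree_mul_le
    (p := (X : ℝ[X]) ^ k) (q := (X + C 1) ^ (n - k)))) ?_
  have e1 : (X ^ k : ℝ[X]).natDegree = k := Polynomial.natDegree_X_pow k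
  have e2 : ((X + C 1 : ℝ[X]) ^ (n - k)).natDegree ≤ n - k := by
    rw [Polynomial.natDegree_pow, Polynomial.natDegree_X_add_C]
    omega
  omega

lemma qp_roots_card (n : ℕ) : Multiset.card (qp n).roots = n ∧ (qp n).natDegree = n := by
  have hg : (X ^ n * (X + C 1) ^ n : ℝ[X]) ≠ 0 :=
    ((monic_X_pow n).mul ((monic_X_add_C (1:ℝ)).pow n)).ne_zero
  have hroots : Multiset.card (X ^ n * (X + C 1) ^ n : ℝ[X]).roots = 2 * n := by
    have hx1 : (X + C 1 : ℝ[X]) = X - C (-1) := by rw [map_neg, sub_neg_eq_add]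
    rw [Polynomial.roots_mul hg, Polynomial.roots_pow, Polynomial.roots_pow,
      Polynomial.roots_X, hx1, Polynomial.roots_X_sub_C]
    simp; omega
  have key : ∀ k : ℕ, 2 * n ≤ Multiset.card (derivative^[k] (X ^ n * (X + C 1) ^ n : ℝ[X])).roots + k := by
    intro k
    induction k with
    | zero => simp only [Function.iterate_zero_apply]; omega
    | succ k ih =>
      have := Polynomial.card_roots_le_derivative (derivative^[k] (X ^ n * (X + C 1) ^ n : ℝ[X]))
      rw [Function.iterate_succ_apply']
      omega
  have h1 := key n
  rw [qd n] at h1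
  have h2 : ((Nat.factorial n) • qp n : ℝ[X]).roots = (qp n).roots := by
    rw [← Nat.cast_smul_eq_nsmul ℝ]
    exact Polynomial.roots_smul_nonzero _ (by exact_mod_cast (Nat.factorial_ne_zero n))
  rw [h2] at h1
  have h3 := Polynomial.card_roots' (qp n)
  have h4 := qp_natDegree_le n
  constructor <;> omega



noncomputable def Mx (n : ℕ) (u : ℝ) : ℝ :=
  ∑ k ∈ Finset.range (n + 1), (n.choose k : ℝ) ^ 2 * u ^ k

lemma qp_eval (n : ℕ) (x : ℝ) :
    (qp n).eval x = ∑ k ∈ Finset.range (n + 1),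
      (n.choose k : ℝ) ^ 2 * (x ^ k * (x + 1) ^ (n - k)) := by
  rw [qp, Polynomial.eval_finset_sum]
  refine Finset.sum_congr rfl fun k hk => ?_
  simp [nsmul_eq_mul]

lemma qp_eval_neg_one (n : ℕ) : (qp n).eval (-1) = (-1) ^ n := by
  rw [qp_eval]
  rw [Finset.sum_eq_single n]
  · simp
  · intro k hk hkn
    have hk' : k ≤ n := by simp only [Finset.mem_range] at hk; omega
    have : n - k ≠ 0 := by omega
    simp [zero_pow this]
  · intro h
    exact absurd (Finset.self_mem_range_succ n) h

lemma mx_ge_one (n : ℕ) {u : ℝ} (hu : 0 ≤ u) : 1 ≤ Mx n u := by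
  have h0 : ((n.choose 0 : ℝ)) ^ 2 * u ^ 0 = 1 := by simp
  calc (1 : ℝ) = (n.choose 0 : ℝ) ^ 2 * u ^ 0 := h0.symm
    _ ≤ ∑ k ∈ Finset.range (n + 1), (n.choose k : ℝ) ^ 2 * u ^ k := by
        refine Finset.single_le_sum (f := fun k => (n.choose k : ℝ) ^ 2 * u ^ k)
          (fun k _ => mul_nonneg (sq_nonneg _) (pow_nonneg hu k)) ?_
        simp
    _ = Mx n u := rfl

lemma continuous_Mx (n : ℕ) : Continuous (Mx n) := by
  unfold Mx
  exact continuous_finset_sum _ fun k _ => continuous_const.mul (continuous_pow k)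

lemma continuous_addprod (l : List ℝ) :
    Continuous fun u : ℝ => (l.map (fun r => u + r)).prod := by
  induction l with
  | nil => simpa using continuous_const
  | cons r l ih =>
    simp only [List.map_cons, List.prod_cons]
    exact (continuous_id.add continuous_const).mul ih

lemma subst_id (n : ℕ) {u : ℝ} (hu : u ≠ 1) :
    Mx n u = (1 - u) ^ n * (qp n).eval (u / (1 - u)) := by
  have h1 : (1 : ℝ) - u ≠ 0 := sub_ne_zero.2 (Ne.symm hu)
  rw [qp_eval, Finset.mul_sum, Mx]
  refine Finset.sum_congr rfl fun k hk => ?_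
  have hk' : k ≤ n := by simp only [Finset.mem_range] at hk; omega
  have h2 : u / (1 - u) + 1 = 1 / (1 - u) := by field_simp; ring
  rw [h2]
  have hnk : k + (n - k) = n := by omega
  rw [← hnk, pow_add (1 - u)]
  rw [div_pow, div_pow, one_pow]
  field_simp
  rw [Nat.add_sub_cancel_left]

lemma exists_fac (n : ℕ) :
    ∃ (cst : ℝ) (l : List ℝ), 0 < cst ∧ (∀ r ∈ l, 0 < r) ∧
      ∀ u : ℝ, Mx n u = cst * (l.map (fun r => u + r)).prod := by
  obtain ⟨hcard, hdeg⟩ := qp_roots_card n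
  have hsplits : Splits (qp n) :=
    (Polynomial.splits_iff_card_roots).mpr (hcard.trans hdeg.symm)
  have hfac := hsplits.eq_prod_roots
  have heval : ∀ x : ℝ, (qp n).eval x =
      (qp n).leadingCoeff * (((qp n).roots.map (fun z => x - z)).prod) := by
    intro x
    conv_lhs => rw [hfac]
    rw [Polynomial.eval_mul, Polynomial.eval_C, Polynomial.eval_multiset_prod]
    rw [Multiset.map_map]
    simp
  have hm1 : ∀ z ∈ (qp n).roots, (1 : ℝ) + z ≠ 0 := by
    intro z hz h
    have hroot : (qp n).eval z = 0 := Polynomial.isRoot_of_mem_roots hz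
    have hz1 : z = -1 := by linarith
    rw [hz1, qp_eval_neg_one] at hroot
    have := pow_ne_zero n (by norm_num : (-1 : ℝ) ≠ 0)
    exact this hroot
  set ms := (qp n).roots with hms
  set cst : ℝ := (qp n).leadingCoeff * ((ms.map (fun z => 1 + z)).prod) with hcst
  set l : List ℝ := (ms.map (fun z => -z / (1 + z))).toList with hl
  have hlist : ∀ u : ℝ, (l.map (fun r => u + r)).prod
      = ((ms.map (fun z => -z / (1 + z))).map (fun r => u + r)).prod := by
    intro u
    calc (l.map (fun r => u + r)).prod
        = ((↑(l.map (fun r => u + r)) : Multiset ℝ)).prod := by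
          rw [Multiset.prod_coe]
      _ = (((↑l : Multiset ℝ)).map (fun r => u + r)).prod := by
          rw [Multiset.map_coe]
      _ = _ := by rw [hl, Multiset.coe_toList]
  have key : ∀ u : ℝ, u ≠ 1 → Mx n u = cst * (l.map (fun r => u + r)).prod := by
    intro u hu
    have h1 : (1 : ℝ) - u ≠ 0 := sub_ne_zero.2 (Ne.symm hu)
    have e1 : Mx n u = (qp n).leadingCoeff *
        (ms.map (fun z => (u / (1 - u) - z) * (1 - u))).prod := by
      rw [subst_id n hu, heval]
      rw [Multiset.prod_map_mul]
      have e2 : (ms.map (fun _ => (1 - u))).prod = (1 - u) ^ n := by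
        rw [Multiset.map_const', Multiset.prod_replicate, hcard]
      rw [e2]
      ring
    have e3 : ∀ z ∈ ms, (u / (1 - u) - z) * (1 - u)
        = (1 + z) * (u + -z / (1 + z)) := by
      intro z hz
      have hz1 := hm1 z hz
      field_simp
      ring
    rw [Multiset.map_congr rfl e3] at e1
    rw [Multiset.prod_map_mul] at e1
    rw [e1, hlist, Multiset.map_map, hcst]
    simp only [Function.comp]
    ring
  have hcont2 : Continuous fun u : ℝ => cst * (l.map (fun r => u + r)).prod :=
    continuous_const.mul (continuous_addprod l)
  have hEq : ∀ u : ℝ, Mx n u = cst * (l.map (fun r => u + r)).prod := by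
    have hEqOn : Set.EqOn (Mx n) (fun u : ℝ => cst * (l.map (fun r => u + r)).prod)
        ({(1 : ℝ)}ᶜ) := fun u hu => key u hu
    have hcl := hEqOn.closure (continuous_Mx n) hcont2
    have : closure ({(1 : ℝ)}ᶜ) = Set.univ := (dense_compl_singleton (1 : ℝ)).closure_eq
    intro u
    exact hcl (by rw [this]; trivial)
  have hlpos : ∀ r ∈ l, 0 < r := by
    intro r hr
    by_contra hcon
    push_neg at hcon
    have hu : (0 : ℝ) ≤ -r := by linarith
    have h0 : ((l.map (fun x => -r + x)).prod) = 0 := by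
      refine List.prod_eq_zero ?_
      exact List.mem_map.mpr ⟨r, hr, by ring⟩
    have := hEq (-r)
    rw [h0, mul_zero] at this
    linarith [mx_ge_one n hu]
  have hprodpos : 0 < ((l.map (fun r => (0 : ℝ) + r)).prod) := by
    refine List.prod_pos ?_
    intro x hx
    obtain ⟨r, hr, rfl⟩ := List.mem_map.mp hx
    simpa using hlpos r hr
  have hcpos : 0 < cst := by
    by_contra hcon
    push_neg at hcon
    have h1 := hEq 0
    have h2 := mx_ge_one n (le_refl (0 : ℝ))
    nlinarith
  exact ⟨cst, l, hcpos, hlpos, hEq⟩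


lemma B_eq (n : ℕ) (t : ℝ) :
    B (n + 1) t = ∑ j ∈ Finset.range n,
      ((j + 1 : ℕ) : ℝ) * ((n.choose (j + 1) : ℝ)) ^ 2 * t ^ (2 * j + 1) := by
  rw [B]
  simp only [Nat.add_sub_cancel]
  rw [← Finset.Ico_add_one_right_eq_Icc, Finset.sum_Ico_eq_sum_range]
  refine Finset.sum_congr rfl fun j hj => ?_
  rw [show 1 + j = j + 1 by omega]
  rw [show 2 * (j + 1) - 1 = 2 * j + 1 by omega]

lemma A_eq (n : ℕ) (t : ℝ) :
    A (n + 1) t = ∑ j ∈ Finset.range n,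
      ((j + 1 : ℕ) : ℝ) ^ 2 * ((n.choose (j + 1) : ℝ)) ^ 2 * t ^ (2 * j) := by
  rw [A]
  simp only [Nat.add_sub_cancel]
  rw [← Finset.Ico_add_one_right_eq_Icc, Finset.sum_Ico_eq_sum_range]
  refine Finset.sum_congr rfl fun j hj => ?_
  rw [show 1 + j = j + 1 by omega]
  rw [show (j + 1) - 1 = j by omega]

lemma M_deriv (n : ℕ) (t : ℝ) : HasDerivAt (M (n + 1)) (2 * B (n + 1) t) t := by
  have h : HasDerivAt (fun t : ℝ => ∑ k ∈ Finset.range (n + 1),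
        ((n.choose k : ℝ)) ^ 2 * t ^ (2 * k))
      (∑ k ∈ Finset.range (n + 1),
        ((n.choose k : ℝ)) ^ 2 * ((2 * k : ℕ) * t ^ (2 * k - 1))) t := by
    refine HasDerivAt.fun_sum fun k _ => ?_
    exact (hasDerivAt_pow (2 * k) t).const_mul _
  have hfun : M (n + 1) = fun t : ℝ => ∑ k ∈ Finset.range (n + 1),
      ((n.choose k : ℝ)) ^ 2 * t ^ (2 * k) := by
    funext x
    rw [M]
    simp only [Nat.add_sub_cancel]
  rw [hfun]
  convert h using 1
  rw [Finset.sum_range_succ']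
  simp only [Nat.mul_zero, Nat.cast_zero, zero_mul, mul_zero, add_zero]
  rw [B_eq, Finset.mul_sum]
  refine Finset.sum_congr rfl fun j hj => ?_
  rw [show 2 * (j + 1) - 1 = 2 * j + 1 by omega]
  push_cast
  ring

lemma tB_deriv (n : ℕ) (t : ℝ) :
    HasDerivAt (fun t : ℝ => t * B (n + 1) t) (2 * t * A (n + 1) t) t := by
  have hfun : (fun t : ℝ => t * B (n + 1) t) = fun t : ℝ => ∑ j ∈ Finset.range n,
      ((j + 1 : ℕ) : ℝ) * ((n.choose (j + 1) : ℝ)) ^ 2 * t ^ (2 * j + 2) := by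
    funext x
    rw [B_eq, Finset.mul_sum]
    refine Finset.sum_congr rfl fun j hj => ?_
    ring
  have h : HasDerivAt (fun t : ℝ => ∑ j ∈ Finset.range n,
        ((j + 1 : ℕ) : ℝ) * ((n.choose (j + 1) : ℝ)) ^ 2 * t ^ (2 * j + 2))
      (∑ j ∈ Finset.range n,
        ((j + 1 : ℕ) : ℝ) * ((n.choose (j + 1) : ℝ)) ^ 2 *
          ((2 * j + 2 : ℕ) * t ^ (2 * j + 1))) t := by
    refine HasDerivAt.fun_sum fun j _ => ?_
    have := (hasDerivAt_pow (2 * j + 2) t).const_mul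
      (((j + 1 : ℕ) : ℝ) * ((n.choose (j + 1) : ℝ)) ^ 2)
    exact this.congr_deriv (by rw [show 2 * j + 2 - 1 = 2 * j + 1 by omega])
  rw [hfun]
  convert h using 1
  rw [A_eq, Finset.mul_sum]
  refine Finset.sum_congr rfl fun j hj => ?_
  push_cast
  ring

lemma continuous_M (n : ℕ) : Continuous (M (n + 1)) := by
  unfold M
  exact continuous_finset_sum _ fun k _ => continuous_const.mul (continuous_pow _)

lemma continuous_A (n : ℕ) : Continuous (A (n + 1)) := by
  unfold A
  exact continuous_finset_sum _ fun k _ => continuous_const.mul (continuous_pow _)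

lemma continuous_B (n : ℕ) : Continuous (B (n + 1)) := by
  unfold B
  exact continuous_finset_sum _ fun k _ => continuous_const.mul (continuous_pow _)


theorem key_identity (n : ℕ) :
    ∃ (cst : ℝ) (l : List ℝ), 0 < cst ∧ (∀ r ∈ l, 0 < r) ∧
      (∀ t : ℝ, M (n + 1) t = cst * Pl l t) ∧
      (∀ t : ℝ, A (n + 1) t * M (n + 1) t - (B (n + 1) t) ^ 2 = cst ^ 2 * Vl l t) := by
  obtain ⟨cst, l, hcpos, hlpos, hEq⟩ := exists_fac n
  have hM : ∀ t : ℝ, M (n + 1) t = cst * Pl l t := by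
    intro t
    have h1 : M (n + 1) t = Mx n (t ^ 2) := by
      rw [M, Mx]
      simp only [Nat.add_sub_cancel]
      exact Finset.sum_congr rfl fun k _ => by rw [pow_mul]
    rw [h1, hEq (t ^ 2), Pl_eq_prod]
  have hB : ∀ t : ℝ, B (n + 1) t = cst * (t * Sl l t) := by
    intro t
    have h1 := M_deriv n t
    have h2 : HasDerivAt (M (n + 1)) (cst * (2 * t * Sl l t)) t := by
      have hfun : M (n + 1) = fun t => cst * Pl l t := funext hM
      rw [hfun]
      exact (hasDerivAt_Pl l t).const_mul cst
    have h3 := h1.unique h2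
    linarith
  have hA : ∀ t : ℝ, t ≠ 0 → A (n + 1) t = cst * (Sl l t + t * Tl l t / 2) := by
    intro t ht
    have h3 := tB_deriv n t
    have h4 : HasDerivAt (fun t : ℝ => t * B (n + 1) t)
        (cst * (2 * t * Sl l t + t ^ 2 * Tl l t)) t := by
      have hfun : (fun t : ℝ => t * B (n + 1) t) = fun t : ℝ => cst * (t ^ 2 * Sl l t) := by
        funext x
        rw [hB x]
        ring
      rw [hfun]
      have := ((hasDerivAt_pow 2 t).fun_mul (hasDerivAt_Sl l t)).const_mul cst
      refine this.congr_deriv ?_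
      push_cast
      ring
    have h5 := h3.unique h4
    have h2t : (2 : ℝ) * t ≠ 0 := mul_ne_zero two_ne_zero ht
    apply mul_left_cancel₀ h2t
    calc 2 * t * A (n + 1) t = cst * (2 * t * Sl l t + t ^ 2 * Tl l t) := h5
      _ = 2 * t * (cst * (Sl l t + t * Tl l t / 2)) := by ring
  have hkey : ∀ t : ℝ, A (n + 1) t * M (n + 1) t - (B (n + 1) t) ^ 2 = cst ^ 2 * Vl l t := by
    have hEqOn : Set.EqOn (fun t => A (n + 1) t * M (n + 1) t - (B (n + 1) t) ^ 2)
        (fun t => cst ^ 2 * Vl l t) ({(0 : ℝ)}ᶜ) := by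
      intro t ht
      have ht' : t ≠ 0 := ht
      simp only
      rw [hA t ht', hM t, hB t, ← key_alg l t]
      ring
    have hc1 : Continuous fun t => A (n + 1) t * M (n + 1) t - (B (n + 1) t) ^ 2 :=
      ((continuous_A n).mul (continuous_M n)).sub ((continuous_B n).pow 2)
    have hc2 : Continuous fun t => cst ^ 2 * Vl l t := continuous_const.mul (continuous_Vl l)
    intro t
    have hcl := hEqOn.closure hc1 hc2
    exact hcl (by rw [(dense_compl_singleton (0 : ℝ)).closure_eq]; trivial)
  exact ⟨cst, l, hcpos, hlpos, hM, hkey⟩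

end Stmt6Aux

theorem stmt_6 (d : ℕ) (hd : 2 ≤ d) :
    ∀ s t : ℝ, 0 ≤ s → s ≤ t → f d t ≤ f d s := by
  obtain ⟨n, rfl⟩ : ∃ n, d = n + 1 := ⟨d - 1, by omega⟩
  obtain ⟨cst, l, hcpos, hlpos, hM, hkey⟩ := Stmt6Aux.key_identity n
  intro s t hs hst
  have hPs := Stmt6Aux.Pl_pos l hlpos s
  have hPt := Stmt6Aux.Pl_pos l hlpos t
  have hf : ∀ x : ℝ, f (n + 1) x =
      (1 / Real.pi) * Real.sqrt (Stmt6Aux.Vl l x) / Stmt6Aux.Pl l x := by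
    intro x
    have hPx := Stmt6Aux.Pl_pos l hlpos x
    rw [f, hkey x, hM x]
    rw [Real.sqrt_mul (sq_nonneg cst), Real.sqrt_sq hcpos.le]
    rw [div_eq_div_iff (by positivity) (by positivity)]
    ring
  rw [hf s, hf t]
  have hmain : Real.sqrt (Stmt6Aux.Vl l t) / Stmt6Aux.Pl l t ≤
      Real.sqrt (Stmt6Aux.Vl l s) / Stmt6Aux.Pl l s := by
    rw [div_le_div_iff₀ hPt hPs]
    have e1 : Real.sqrt (Stmt6Aux.Vl l t) * Stmt6Aux.Pl l s
        = Real.sqrt (Stmt6Aux.Vl l t * (Stmt6Aux.Pl l s) ^ 2) := by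
      rw [Real.sqrt_mul (Stmt6Aux.Vl_nonneg l hlpos t), Real.sqrt_sq hPs.le]
    have e2 : Real.sqrt (Stmt6Aux.Vl l s) * Stmt6Aux.Pl l t
        = Real.sqrt (Stmt6Aux.Vl l s * (Stmt6Aux.Pl l t) ^ 2) := by
      rw [Real.sqrt_mul (Stmt6Aux.Vl_nonneg l hlpos s), Real.sqrt_sq hPt.le]
    rw [e1, e2]
    exact Real.sqrt_le_sqrt (Stmt6Aux.Vl_mono l hlpos hs hst)
  rw [mul_div_assoc, mul_div_assoc]
  have hpi : (0 : ℝ) ≤ 1 / Real.pi := by positivity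
  exact mul_le_mul_of_nonneg_left hmain hpi
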